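/- For every permutation π of [n], applying the map id_n L(π) to each i ∈ [n] yields π(i); that is, i + |{j : i < j ≤ n and π(i) > π(j)}| − |{j : 1 ≤ j < i and π(i) < π(j)}| = π(i) for all i ∈ [n]. -/
import Mathlib


open Finset

/-- Two permutations are adjacent if every element's position changes by at most one. -/
def Adjacent {n : ℕ} (π σ : Equiv.Perm (Fin n)) : Prop :=
  ∀ i, ((π i : ℤ) - (σ i : ℤ)).natAbs ≤ 1

/-- Number of times wires `i` and `j` swap in the sequence `T` of height `h`. -/
def SwapCount {n : ℕ} (T : ℕ → Equiv.Perm (Fin n)) (h : ℕ) (i j : Fin n) : ℕ :=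
  ((Finset.range (h - 1)).filter fun t => T t i = T (t+1) j ∧ T t j = T (t+1) i).card

/-- A tangle of height `h`: a nonempty sequence of permutations with consecutive ones adjacent. -/
def IsTangle {n : ℕ} (T : ℕ → Equiv.Perm (Fin n)) (h : ℕ) : Prop :=
  1 ≤ h ∧ ∀ t, t + 1 < h → Adjacent (T t) (T (t+1))

/-- A tangle starting at the identity realizing the list `l`. -/
def Realizes {n : ℕ} (T : ℕ → Equiv.Perm (Fin n)) (h : ℕ) (l : Fin n → Fin n → ℕ) : Prop :=
  IsTangle T h ∧ T 0 = 1 ∧ ∀ i j, i ≠ j → SwapCount T h i j = l i j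

/-- A list is feasible if some tangle starting at the identity realizes it. -/
def Feasible {n : ℕ} (l : Fin n → Fin n → ℕ) : Prop :=
  ∃ h T, Realizes T h l

/-- A list is consistent if the map `id_n L` is a permutation of `[n]`. -/
def Consistent {n : ℕ} (l : Fin n → Fin n → ℕ) : Prop :=
  ∃ ρ : Equiv.Perm (Fin n), ∀ i : Fin n,
    ((i : ℤ) + ((Finset.univ.filter fun j => i < j ∧ Odd (l i j)).card : ℤ)
      - ((Finset.univ.filter fun j => j < i ∧ Odd (l i j)).card : ℤ)) = (ρ i : ℤ)

/-- Applying the map id_n L(π) to any i yields π i. -/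
theorem idn_Lpi_eq (n : ℕ) (π : Equiv.Perm (Fin n)) (i : Fin n) :
    ((i : ℤ) + ((Finset.univ.filter fun j => i < j ∧ π j < π i).card : ℤ)
      - ((Finset.univ.filter fun j => j < i ∧ π i < π j).card : ℤ)) = (π i : ℤ) := by
  have key : ∀ m : Fin n, (univ.filter fun k : Fin n => k < m).card = (m : ℕ) := by
    intro m
    have : (univ.filter fun k : Fin n => k < m) = Iio m := by ext k; simp
    rw [this, Fin.card_Iio]
  -- card of {j | π j < π i} = π i
  have h1 : (univ.filter fun j => π j < π i).card = (π i : ℕ) := by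
    rw [← key (π i)]
    apply Finset.card_bij (fun j _ => π j)
    · intro a ha; simp at ha ⊢; exact ha
    · intro a _ b _ h; exact π.injective h
    · intro b hb; exact ⟨π.symm b, by simpa using hb, by simp⟩
  have h2 : (univ.filter fun j => j < i).card = (i : ℕ) := key i
  have hs1 : (univ.filter fun j => π j < π i).card =
      (univ.filter fun j => j < i ∧ π j < π i).card +
      (univ.filter fun j => i < j ∧ π j < π i).card := by
    rw [← Finset.card_union_of_disjoint, ← Finset.filter_or]
    · apply congrArg Finset.card
      apply Finset.filter_congr
      intro j _
      constructor
      · intro h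
        rcases lt_trichotomy j i with hc | hc | hc
        · exact Or.inl ⟨hc, h⟩
        · exact absurd (hc ▸ h) (lt_irrefl _)
        · exact Or.inr ⟨hc, h⟩
      · rintro (⟨_, h⟩ | ⟨_, h⟩) <;> exact h
    · rw [Finset.disjoint_left]
      rintro j hj hj'
      simp at hj hj'
      exact absurd (hj.1.trans hj'.1) (lt_irrefl _)
  have hs2 : (univ.filter fun j => j < i).card =
      (univ.filter fun j => j < i ∧ π j < π i).card +
      (univ.filter fun j => j < i ∧ π i < π j).card := by
    rw [← Finset.card_union_of_disjoint, ← Finset.filter_or]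
    · apply congrArg Finset.card
      apply Finset.filter_congr
      intro j _
      constructor
      · intro h
        rcases lt_trichotomy (π j) (π i) with hc | hc | hc
        · exact Or.inl ⟨h, hc⟩
        · exact absurd (π.injective hc ▸ h) (lt_irrefl _)
        · exact Or.inr ⟨h, hc⟩
      · rintro (⟨h, _⟩ | ⟨h, _⟩) <;> exact h
    · rw [Finset.disjoint_left]
      rintro j hj hj'
      simp at hj hj'
      exact absurd (hj.2.trans hj'.2) (lt_irrefl _)
  omega
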